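/- For the inverse Hasse–Schmidt operator 𝔇₂ on ⋀M_n: 𝔇₂^m(ε^{i₁}∧ε^{i₂}∧ε^{i₃}∧ε^{i₄}) = Σ_{μ∈p₄(m), 0≤l≤μ₁+μ₂} (m!/(μ₁!μ₂!μ₃!μ₄!)) C(μ₁+μ₂, l) · ε^{i₁+μ₁+μ₄} ∧ ε^{i₂+μ₂+μ₄} ∧ ε^{i₃+μ₃+l} ∧ ε^{i₄+μ₁+μ₂+μ₃−l}. -/

import Mathlib

open ExteriorAlgebra Finset

section aux
variable {M : Type*} [AddCommGroup M] [Module ℤ M] (ε : ℕ → M)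
  (Dbar : ℕ → Module.End ℤ (ExteriorAlgebra ℤ M))

local notation "g" => fun k => ι ℤ (ε k)

lemma D1_mul (hB0 : Dbar 0 = 1)
    (hBLeib : ∀ (h : ℕ) (p q : ExteriorAlgebra ℤ M),
      Dbar h (p * q) = ∑ x ∈ Finset.HasAntidiagonal.antidiagonal h, Dbar x.1 p * Dbar x.2 q)
    (p q : ExteriorAlgebra ℤ M) :
    Dbar 1 (p * q) = Dbar 1 p * q + p * Dbar 1 q := by
  rw [hBLeib]
  rw [show (Finset.HasAntidiagonal.antidiagonal 1 : Finset (ℕ×ℕ)) = {(0,1),(1,0)} from by decide,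
    Finset.sum_insert (by decide), Finset.sum_singleton]
  simp [hB0]
  abel

lemma D2_mul (hB0 : Dbar 0 = 1)
    (hBLeib : ∀ (h : ℕ) (p q : ExteriorAlgebra ℤ M),
      Dbar h (p * q) = ∑ x ∈ Finset.HasAntidiagonal.antidiagonal h, Dbar x.1 p * Dbar x.2 q)
    (p q : ExteriorAlgebra ℤ M) :
    Dbar 2 (p * q) = Dbar 2 p * q + Dbar 1 p * Dbar 1 q + p * Dbar 2 q := by
  rw [hBLeib]
  rw [show (Finset.HasAntidiagonal.antidiagonal 2 : Finset (ℕ×ℕ)) = {(0,2),(1,1),(2,0)} from by decide,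
    Finset.sum_insert (by decide), Finset.sum_insert (by decide), Finset.sum_singleton]
  simp [hB0]
  abel


lemma D2_quad (hB0 : Dbar 0 = 1)
    (hBLeib : ∀ (h : ℕ) (p q : ExteriorAlgebra ℤ M),
      Dbar h (p * q) = ∑ x ∈ Finset.HasAntidiagonal.antidiagonal h, Dbar x.1 p * Dbar x.2 q)
    (hB1 : ∀ i : ℕ, 1 ≤ i → Dbar 1 (ι ℤ (ε i)) = ι ℤ (ε (i + 1)))
    (hBhi : ∀ j i : ℕ, 2 ≤ j → 1 ≤ i → Dbar j (ι ℤ (ε i)) = 0)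
    (a b c d : ℕ) (ha : 1 ≤ a) (hb : 1 ≤ b) (hc : 1 ≤ c) (hd : 1 ≤ d) :
    Dbar 2 (g a * g b * g c * g d) =
      g (a+1) * g (b+1) * g c * g d + g (a+1) * g b * g (c+1) * g d
      + g (a+1) * g b * g c * g (d+1) + g a * g (b+1) * g (c+1) * g d
      + g a * g (b+1) * g c * g (d+1) + g a * g b * g (c+1) * g (d+1) := by
  have P1 : ∀ x y : ℕ, 1 ≤ x → 1 ≤ y →
      Dbar 1 (g x * g y) = g (x+1) * g y + g x * g (y+1) := by
    intro x y hx hy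
    rw [D1_mul _ hB0 hBLeib, hB1 x hx, hB1 y hy]
  have P2 : ∀ x y : ℕ, 1 ≤ x → 1 ≤ y →
      Dbar 2 (g x * g y) = g (x+1) * g (y+1) := by
    intro x y hx hy
    rw [D2_mul _ hB0 hBLeib, hBhi 2 x le_rfl hx, hBhi 2 y le_rfl hy, hB1 x hx, hB1 y hy]
    simp
  rw [show (g a * g b * g c * g d : ExteriorAlgebra ℤ M) = (g a * g b) * (g c * g d) from by
    rw [mul_assoc]]
  rw [D2_mul _ hB0 hBLeib, P2 a b ha hb, P2 c d hc hd, P1 a b ha hb, P1 c d hc hd]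
  noncomm_ring

end aux
open Finset

/-- bump coordinate `j` up by one -/
def upd4 (j : Fin 4) (μ : Fin 4 → ℕ) : Fin 4 → ℕ := Function.update μ j (μ j + 1)
/-- bump coordinate `j` down by one -/
def dwn4 (j : Fin 4) (μ : Fin 4 → ℕ) : Fin 4 → ℕ := Function.update μ j (μ j - 1)

lemma sum_update4 (μ : Fin 4 → ℕ) (j : Fin 4) (v : ℕ) :
    (∑ i, Function.update μ j v i) + μ j = (∑ i, μ i) + v := by
  rw [Finset.sum_update_of_mem (mem_univ j),
    Finset.sum_eq_add_sum_sdiff_singleton_of_mem (mem_univ j) μ]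
  omega

lemma sum_upd4 (μ : Fin 4 → ℕ) (j : Fin 4) : (∑ i, upd4 j μ i) = (∑ i, μ i) + 1 := by
  have := sum_update4 μ j (μ j + 1)
  unfold upd4
  omega

lemma sum_dwn4 (μ : Fin 4 → ℕ) (j : Fin 4) (h : 1 ≤ μ j) :
    (∑ i, dwn4 j μ i) + 1 = ∑ i, μ i := by
  have := sum_update4 μ j (μ j - 1)
  unfold dwn4
  omega

lemma dwn4_upd4 (j : Fin 4) (μ : Fin 4 → ℕ) : dwn4 j (upd4 j μ) = μ := by
  unfold dwn4 upd4
  rw [Function.update_idem, Function.update_self]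
  simp

lemma upd4_dwn4 (j : Fin 4) (μ : Fin 4 → ℕ) (h : 1 ≤ μ j) : upd4 j (dwn4 j μ) = μ := by
  unfold dwn4 upd4
  rw [Function.update_idem, Function.update_self]
  rw [show μ j - 1 + 1 = μ j from by omega]
  simp

lemma mult_pascal4 (μ : Fin 4 → ℕ) (h : 1 ≤ ∑ i, μ i) :
    Nat.multinomial Finset.univ μ =
      ∑ j : Fin 4, if 1 ≤ μ j then Nat.multinomial Finset.univ (dwn4 j μ) else 0 := by
  have hP : 0 < ∏ i, (μ i).factorial := prod_pos fun i _ => (μ i).factorial_pos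
  apply Nat.eq_of_mul_eq_mul_left hP
  rw [Nat.multinomial_spec, Finset.mul_sum]
  have step : ∀ j : Fin 4,
      (∏ i, (μ i).factorial) *
        (if 1 ≤ μ j then Nat.multinomial Finset.univ (dwn4 j μ) else 0) =
      μ j * (∑ i, μ i - 1).factorial := by
    intro j
    by_cases hj : 1 ≤ μ j
    · rw [if_pos hj]
      have hfe : (fun i => ((dwn4 j μ) i).factorial)
          = Function.update (fun i => (μ i).factorial) j ((μ j - 1).factorial) := by
        funext i
        rcases eq_or_ne i j with rfl | hne
        · simp [dwn4]
        · simp [dwn4, Function.update_of_ne hne]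
      have hprod : (∏ i, (μ i).factorial) = μ j * ∏ i, ((dwn4 j μ) i).factorial := by
        rw [hfe, Finset.prod_update_of_mem (mem_univ j),
          Finset.prod_eq_mul_prod_sdiff_singleton_of_mem (mem_univ j) (fun i => (μ i).factorial)]
        rw [← mul_assoc]
        congr 1
        rw [← Nat.mul_factorial_pred (by omega : μ j ≠ 0)]
      rw [hprod, mul_assoc, Nat.multinomial_spec]
      congr 2
      have := sum_dwn4 μ j hj
      omega
    · rw [if_neg hj]
      have : μ j = 0 := by omega
      simp [this]
  rw [Finset.sum_congr rfl fun j _ => step j, ← Finset.sum_mul, Nat.mul_factorial_pred (by omega : ∑ i, μ i ≠ 0)]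

lemma upd4_apply (j : Fin 4) (μ : Fin 4 → ℕ) (i : Fin 4) :
    upd4 j μ i = if i = j then μ j + 1 else μ i := Function.update_apply μ j (μ j + 1) i

example (μ : Fin 4 → ℕ) : upd4 3 μ 0 = μ 0 := by simp [upd4_apply]
example (μ : Fin 4 → ℕ) : upd4 0 μ 0 = μ 0 + 1 := by simp [upd4_apply]
example : Nat.multinomial Finset.univ (0 : Fin 4 → ℕ) = 1 := by decide

lemma choose_pascal' (s l : ℕ) (hs : 1 ≤ s) :
    s.choose l = (s-1).choose l + (if 1 ≤ l then (s-1).choose (l-1) else 0) := by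
  obtain ⟨s', rfl⟩ : ∃ s', s = s' + 1 := ⟨s - 1, by omega⟩
  rcases l with _ | k
  · simp
  · rw [if_pos (by omega)]
    simp only [Nat.add_sub_cancel, Nat.choose_succ_succ, Nat.succ_eq_add_one]
    omega

lemma nat_split (μ : Fin 4 → ℕ) (h : 1 ≤ ∑ i, μ i) (l : ℕ) :
    Nat.multinomial Finset.univ μ * (μ 0 + μ 1).choose l =
      ((if 1 ≤ μ 0 then Nat.multinomial Finset.univ (dwn4 0 μ) * (μ 0 - 1 + μ 1).choose l else 0)
      + (if 1 ≤ μ 0 ∧ 1 ≤ l then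
          Nat.multinomial Finset.univ (dwn4 0 μ) * (μ 0 - 1 + μ 1).choose (l-1) else 0))
      + ((if 1 ≤ μ 1 then Nat.multinomial Finset.univ (dwn4 1 μ) * (μ 0 + (μ 1 - 1)).choose l else 0)
      + (if 1 ≤ μ 1 ∧ 1 ≤ l then
          Nat.multinomial Finset.univ (dwn4 1 μ) * (μ 0 + (μ 1 - 1)).choose (l-1) else 0))
      + (if 1 ≤ μ 2 then Nat.multinomial Finset.univ (dwn4 2 μ) * (μ 0 + μ 1).choose l else 0)
      + (if 1 ≤ μ 3 then Nat.multinomial Finset.univ (dwn4 3 μ) * (μ 0 + μ 1).choose l else 0) := by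
  rw [mult_pascal4 μ h, Fin.sum_univ_four, add_mul, add_mul, add_mul]
  have e0 : (if 1 ≤ μ 0 then Nat.multinomial Finset.univ (dwn4 0 μ) else 0) * (μ 0 + μ 1).choose l
      = (if 1 ≤ μ 0 then Nat.multinomial Finset.univ (dwn4 0 μ) * (μ 0 - 1 + μ 1).choose l else 0)
      + (if 1 ≤ μ 0 ∧ 1 ≤ l then
          Nat.multinomial Finset.univ (dwn4 0 μ) * (μ 0 - 1 + μ 1).choose (l-1) else 0) := by
    by_cases h0 : 1 ≤ μ 0
    · rw [if_pos h0, if_pos h0, choose_pascal' _ l (by omega), Nat.mul_add, mul_ite, mul_zero]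
      rw [show μ 0 + μ 1 - 1 = μ 0 - 1 + μ 1 from by omega]
      congr 1
      by_cases hl : 1 ≤ l
      · rw [if_pos hl, if_pos ⟨h0, hl⟩]
      · rw [if_neg hl, if_neg (by tauto)]
    · simp [h0]
  have e1 : (if 1 ≤ μ 1 then Nat.multinomial Finset.univ (dwn4 1 μ) else 0) * (μ 0 + μ 1).choose l
      = (if 1 ≤ μ 1 then Nat.multinomial Finset.univ (dwn4 1 μ) * (μ 0 + (μ 1 - 1)).choose l else 0)
      + (if 1 ≤ μ 1 ∧ 1 ≤ l then
          Nat.multinomial Finset.univ (dwn4 1 μ) * (μ 0 + (μ 1 - 1)).choose (l-1) else 0) := by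
    by_cases h0 : 1 ≤ μ 1
    · rw [if_pos h0, if_pos h0, choose_pascal' _ l (by omega), Nat.mul_add, mul_ite, mul_zero]
      rw [show μ 0 + μ 1 - 1 = μ 0 + (μ 1 - 1) from by omega]
      congr 1
      by_cases hl : 1 ≤ l
      · rw [if_pos hl, if_pos ⟨h0, hl⟩]
      · rw [if_neg hl, if_neg (by tauto)]
    · simp [h0]
  rw [e0, e1]
  simp only [ite_mul, zero_mul]

lemma sum_ite_const {E β : Type*} [AddCommMonoid E] {P : Prop} [Decidable P]
    (s : Finset β) (h : β → E) :
    (∑ x ∈ s, if P then h x else 0) = if P then ∑ x ∈ s, h x else 0 := by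
  split_ifs <;> simp

lemma reindex_up {E : Type*} [AddCommMonoid E] (j : Fin 4) (m : ℕ) (F : (Fin 4 → ℕ) → E) :
    ∑ μ' ∈ (Finset.Nat.antidiagonalTuple 4 (m+1)).filter (fun ν => 1 ≤ ν j), F μ'
      = ∑ μ ∈ Finset.Nat.antidiagonalTuple 4 m, F (upd4 j μ) := by
  refine Finset.sum_nbij' (dwn4 j) (upd4 j) ?_ ?_ ?_ ?_ ?_
  · intro a ha
    rw [Finset.mem_filter, Finset.Nat.mem_antidiagonalTuple] at ha
    rw [Finset.Nat.mem_antidiagonalTuple]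
    have := sum_dwn4 a j ha.2
    omega
  · intro a ha
    rw [Finset.Nat.mem_antidiagonalTuple] at ha
    rw [Finset.mem_filter, Finset.Nat.mem_antidiagonalTuple]
    refine ⟨by rw [sum_upd4]; omega, ?_⟩
    simp [upd4_apply]
  · intro a ha
    exact upd4_dwn4 j a (Finset.mem_filter.mp ha).2
  · intro a _
    exact dwn4_upd4 j a
  · intro a ha
    rw [upd4_dwn4 j a (Finset.mem_filter.mp ha).2]

noncomputable def qt {M : Type*} [AddCommGroup M] [Module ℤ M] (ε : ℕ → M)
    (i₁ i₂ i₃ i₄ : ℕ) (μ : Fin 4 → ℕ) (l : ℕ) : ExteriorAlgebra ℤ M :=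
  ι ℤ (ε (i₁ + μ 0 + μ 3)) * ι ℤ (ε (i₂ + μ 1 + μ 3)) * ι ℤ (ε (i₃ + μ 2 + l)) *
    ι ℤ (ε (i₄ + μ 0 + μ 1 + μ 2 - l))

lemma qt_D2 {M : Type*} [AddCommGroup M] [Module ℤ M] (ε : ℕ → M)
    (Dbar : ℕ → Module.End ℤ (ExteriorAlgebra ℤ M))
    (hB0 : Dbar 0 = 1)
    (hBLeib : ∀ (h : ℕ) (p q : ExteriorAlgebra ℤ M),
      Dbar h (p * q) = ∑ x ∈ Finset.HasAntidiagonal.antidiagonal h, Dbar x.1 p * Dbar x.2 q)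
    (hB1 : ∀ i : ℕ, 1 ≤ i → Dbar 1 (ι ℤ (ε i)) = ι ℤ (ε (i + 1)))
    (hBhi : ∀ j i : ℕ, 2 ≤ j → 1 ≤ i → Dbar j (ι ℤ (ε i)) = 0)
    (i₁ i₂ i₃ i₄ : ℕ) (h1 : 1 ≤ i₁) (h2 : 1 ≤ i₂) (h3 : 1 ≤ i₃) (h4 : 1 ≤ i₄)
    (μ : Fin 4 → ℕ) (l : ℕ) (hl : l ≤ μ 0 + μ 1) :
    Dbar 2 (qt ε i₁ i₂ i₃ i₄ μ l)
      = qt ε i₁ i₂ i₃ i₄ (upd4 3 μ) l + qt ε i₁ i₂ i₃ i₄ (upd4 0 μ) (l+1)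
      + qt ε i₁ i₂ i₃ i₄ (upd4 0 μ) l + qt ε i₁ i₂ i₃ i₄ (upd4 1 μ) (l+1)
      + qt ε i₁ i₂ i₃ i₄ (upd4 1 μ) l + qt ε i₁ i₂ i₃ i₄ (upd4 2 μ) l := by
  rw [qt, D2_quad ε Dbar hB0 hBLeib hB1 hBhi _ _ _ _ (by omega) (by omega) (by omega) (by omega)]
  simp only [qt, upd4_apply, Fin.reduceEq, if_true, if_false, reduceIte]
  rw [show i₁ + μ 0 + (μ 3 + 1) = i₁ + μ 0 + μ 3 + 1 from by omega,
    show i₂ + μ 1 + (μ 3 + 1) = i₂ + μ 1 + μ 3 + 1 from by omega,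
    show i₁ + (μ 0 + 1) + μ 3 = i₁ + μ 0 + μ 3 + 1 from by omega,
    show i₃ + μ 2 + (l + 1) = i₃ + μ 2 + l + 1 from by omega,
    show i₄ + (μ 0 + 1) + μ 1 + μ 2 - (l + 1) = i₄ + μ 0 + μ 1 + μ 2 - l from by omega,
    show i₄ + (μ 0 + 1) + μ 1 + μ 2 - l = i₄ + μ 0 + μ 1 + μ 2 - l + 1 from by omega,
    show i₂ + (μ 1 + 1) + μ 3 = i₂ + μ 1 + μ 3 + 1 from by omega,
    show i₄ + μ 0 + (μ 1 + 1) + μ 2 - (l + 1) = i₄ + μ 0 + μ 1 + μ 2 - l from by omega,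
    show i₄ + μ 0 + (μ 1 + 1) + μ 2 - l = i₄ + μ 0 + μ 1 + μ 2 - l + 1 from by omega,
    show i₃ + (μ 2 + 1) + l = i₃ + μ 2 + l + 1 from by omega,
    show i₄ + μ 0 + μ 1 + (μ 2 + 1) - l = i₄ + μ 0 + μ 1 + μ 2 - l + 1 from by omega]

lemma key_quad {M : Type*} [AddCommGroup M] [Module ℤ M] (ε : ℕ → M)
    (Dbar : ℕ → Module.End ℤ (ExteriorAlgebra ℤ M))
    (hB0 : Dbar 0 = 1)
    (hBLeib : ∀ (h : ℕ) (p q : ExteriorAlgebra ℤ M),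
      Dbar h (p * q) = ∑ x ∈ Finset.HasAntidiagonal.antidiagonal h, Dbar x.1 p * Dbar x.2 q)
    (hB1 : ∀ i : ℕ, 1 ≤ i → Dbar 1 (ι ℤ (ε i)) = ι ℤ (ε (i + 1)))
    (hBhi : ∀ j i : ℕ, 2 ≤ j → 1 ≤ i → Dbar j (ι ℤ (ε i)) = 0)
    (i₁ i₂ i₃ i₄ : ℕ) (h1 : 1 ≤ i₁) (h2 : 1 ≤ i₂) (h3 : 1 ≤ i₃) (h4 : 1 ≤ i₄)
    (m : ℕ) :
    (Dbar 2 ^ m) (ι ℤ (ε i₁) * ι ℤ (ε i₂) * ι ℤ (ε i₃) * ι ℤ (ε i₄)) =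
      ∑ μ ∈ Finset.Nat.antidiagonalTuple 4 m,
        ∑ l ∈ Finset.range (μ 0 + μ 1 + 1),
          (Nat.multinomial Finset.univ μ * (μ 0 + μ 1).choose l) •
            qt ε i₁ i₂ i₃ i₄ μ l := by
  induction m with
  | zero =>
    rw [pow_zero, Module.End.one_apply, Finset.Nat.antidiagonalTuple_zero_right,
      Finset.sum_singleton]
    norm_num [qt]
    rw [show Nat.multinomial Finset.univ (0 : Fin 4 → ℕ) = 1 from by decide]
    simp
  | succ m ih =>
    rw [pow_succ', Module.End.mul_apply, ih]
    have hL : Dbar 2 (∑ μ ∈ Finset.Nat.antidiagonalTuple 4 m,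
          ∑ l ∈ Finset.range (μ 0 + μ 1 + 1),
            (Nat.multinomial Finset.univ μ * (μ 0 + μ 1).choose l) • qt ε i₁ i₂ i₃ i₄ μ l)
        = ∑ μ ∈ Finset.Nat.antidiagonalTuple 4 m,
          ∑ l ∈ Finset.range (μ 0 + μ 1 + 1),
            (Nat.multinomial Finset.univ μ * (μ 0 + μ 1).choose l) •
              (qt ε i₁ i₂ i₃ i₄ (upd4 3 μ) l + qt ε i₁ i₂ i₃ i₄ (upd4 0 μ) (l+1)
              + qt ε i₁ i₂ i₃ i₄ (upd4 0 μ) l + qt ε i₁ i₂ i₃ i₄ (upd4 1 μ) (l+1)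
              + qt ε i₁ i₂ i₃ i₄ (upd4 1 μ) l + qt ε i₁ i₂ i₃ i₄ (upd4 2 μ) l) := by
      rw [map_sum]
      refine Finset.sum_congr rfl fun μ hμ => ?_
      rw [map_sum]
      refine Finset.sum_congr rfl fun l hl => ?_
      rw [map_nsmul, qt_D2 ε Dbar hB0 hBLeib hB1 hBhi i₁ i₂ i₃ i₄ h1 h2 h3 h4 μ l
        (by rw [Finset.mem_range] at hl; omega)]
    rw [hL]
    symm
    have hsum1 : ∀ μ' ∈ Finset.Nat.antidiagonalTuple 4 (m+1), 1 ≤ ∑ i, μ' i := by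
      intro μ' h
      rw [Finset.Nat.mem_antidiagonalTuple] at h
      omega
    have P3 : (∑ μ' ∈ Finset.Nat.antidiagonalTuple 4 (m+1), ∑ l' ∈ Finset.range (μ' 0 + μ' 1 + 1),
          (if 1 ≤ μ' 3 then Nat.multinomial Finset.univ (dwn4 3 μ') * (μ' 0 + μ' 1).choose l' else 0)
            • qt ε i₁ i₂ i₃ i₄ μ' l')
        = ∑ μ ∈ Finset.Nat.antidiagonalTuple 4 m, ∑ l ∈ Finset.range (μ 0 + μ 1 + 1),
          (Nat.multinomial Finset.univ μ * (μ 0 + μ 1).choose l) • qt ε i₁ i₂ i₃ i₄ (upd4 3 μ) l := by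
      have hpt : ∀ μ' ∈ Finset.Nat.antidiagonalTuple 4 (m+1),
          (∑ l' ∈ Finset.range (μ' 0 + μ' 1 + 1),
            (if 1 ≤ μ' 3 then Nat.multinomial Finset.univ (dwn4 3 μ') * (μ' 0 + μ' 1).choose l' else 0)
              • qt ε i₁ i₂ i₃ i₄ μ' l')
          = if 1 ≤ μ' 3 then (∑ l' ∈ Finset.range (μ' 0 + μ' 1 + 1),
              (Nat.multinomial Finset.univ (dwn4 3 μ') * (μ' 0 + μ' 1).choose l')
                • qt ε i₁ i₂ i₃ i₄ μ' l') else 0 := by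
        intro μ' _
        simp only [ite_smul, zero_smul]
        exact sum_ite_const _ _
      rw [Finset.sum_congr rfl hpt, ← Finset.sum_filter, reindex_up 3 m]
      refine Finset.sum_congr rfl fun μ _ => ?_
      rw [dwn4_upd4]
      simp only [upd4_apply, Fin.reduceEq, reduceIte]
    have P2 : (∑ μ' ∈ Finset.Nat.antidiagonalTuple 4 (m+1), ∑ l' ∈ Finset.range (μ' 0 + μ' 1 + 1),
          (if 1 ≤ μ' 2 then Nat.multinomial Finset.univ (dwn4 2 μ') * (μ' 0 + μ' 1).choose l' else 0)
            • qt ε i₁ i₂ i₃ i₄ μ' l')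
        = ∑ μ ∈ Finset.Nat.antidiagonalTuple 4 m, ∑ l ∈ Finset.range (μ 0 + μ 1 + 1),
          (Nat.multinomial Finset.univ μ * (μ 0 + μ 1).choose l) • qt ε i₁ i₂ i₃ i₄ (upd4 2 μ) l := by
      have hpt : ∀ μ' ∈ Finset.Nat.antidiagonalTuple 4 (m+1),
          (∑ l' ∈ Finset.range (μ' 0 + μ' 1 + 1),
            (if 1 ≤ μ' 2 then Nat.multinomial Finset.univ (dwn4 2 μ') * (μ' 0 + μ' 1).choose l' else 0)
              • qt ε i₁ i₂ i₃ i₄ μ' l')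
          = if 1 ≤ μ' 2 then (∑ l' ∈ Finset.range (μ' 0 + μ' 1 + 1),
              (Nat.multinomial Finset.univ (dwn4 2 μ') * (μ' 0 + μ' 1).choose l')
                • qt ε i₁ i₂ i₃ i₄ μ' l') else 0 := by
        intro μ' _
        simp only [ite_smul, zero_smul]
        exact sum_ite_const _ _
      rw [Finset.sum_congr rfl hpt, ← Finset.sum_filter, reindex_up 2 m]
      refine Finset.sum_congr rfl fun μ _ => ?_
      rw [dwn4_upd4]
      simp only [upd4_apply, Fin.reduceEq, reduceIte]
    have P0a : (∑ μ' ∈ Finset.Nat.antidiagonalTuple 4 (m+1), ∑ l' ∈ Finset.range (μ' 0 + μ' 1 + 1),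
          (if 1 ≤ μ' 0 then Nat.multinomial Finset.univ (dwn4 0 μ') * (μ' 0 - 1 + μ' 1).choose l' else 0)
            • qt ε i₁ i₂ i₃ i₄ μ' l')
        = ∑ μ ∈ Finset.Nat.antidiagonalTuple 4 m, ∑ l ∈ Finset.range (μ 0 + μ 1 + 1),
          (Nat.multinomial Finset.univ μ * (μ 0 + μ 1).choose l) • qt ε i₁ i₂ i₃ i₄ (upd4 0 μ) l := by
      have hpt : ∀ μ' ∈ Finset.Nat.antidiagonalTuple 4 (m+1),
          (∑ l' ∈ Finset.range (μ' 0 + μ' 1 + 1),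
            (if 1 ≤ μ' 0 then Nat.multinomial Finset.univ (dwn4 0 μ') * (μ' 0 - 1 + μ' 1).choose l' else 0)
              • qt ε i₁ i₂ i₃ i₄ μ' l')
          = if 1 ≤ μ' 0 then (∑ l' ∈ Finset.range (μ' 0 + μ' 1 + 1),
              (Nat.multinomial Finset.univ (dwn4 0 μ') * (μ' 0 - 1 + μ' 1).choose l')
                • qt ε i₁ i₂ i₃ i₄ μ' l') else 0 := by
        intro μ' _
        simp only [ite_smul, zero_smul]
        exact sum_ite_const _ _
      rw [Finset.sum_congr rfl hpt, ← Finset.sum_filter, reindex_up 0 m]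
      refine Finset.sum_congr rfl fun μ _ => ?_
      rw [dwn4_upd4]
      simp only [upd4_apply, Fin.reduceEq, reduceIte, Nat.add_sub_cancel]
      rw [show μ 0 + 1 + μ 1 + 1 = (μ 0 + μ 1 + 1) + 1 from by omega, Finset.sum_range_succ,
        Nat.choose_eq_zero_of_lt (by omega), Nat.mul_zero, zero_smul, add_zero]
    have P0b : (∑ μ' ∈ Finset.Nat.antidiagonalTuple 4 (m+1), ∑ l' ∈ Finset.range (μ' 0 + μ' 1 + 1),
          (if 1 ≤ μ' 0 ∧ 1 ≤ l' then
            Nat.multinomial Finset.univ (dwn4 0 μ') * (μ' 0 - 1 + μ' 1).choose (l' - 1) else 0)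
            • qt ε i₁ i₂ i₃ i₄ μ' l')
        = ∑ μ ∈ Finset.Nat.antidiagonalTuple 4 m, ∑ l ∈ Finset.range (μ 0 + μ 1 + 1),
          (Nat.multinomial Finset.univ μ * (μ 0 + μ 1).choose l) • qt ε i₁ i₂ i₃ i₄ (upd4 0 μ) (l + 1) := by
      have hpt : ∀ μ' ∈ Finset.Nat.antidiagonalTuple 4 (m+1),
          (∑ l' ∈ Finset.range (μ' 0 + μ' 1 + 1),
            (if 1 ≤ μ' 0 ∧ 1 ≤ l' then
              Nat.multinomial Finset.univ (dwn4 0 μ') * (μ' 0 - 1 + μ' 1).choose (l' - 1) else 0)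
              • qt ε i₁ i₂ i₃ i₄ μ' l')
          = if 1 ≤ μ' 0 then (∑ l' ∈ Finset.range (μ' 0 + μ' 1 + 1),
              if 1 ≤ l' then (Nat.multinomial Finset.univ (dwn4 0 μ') * (μ' 0 - 1 + μ' 1).choose (l' - 1))
                • qt ε i₁ i₂ i₃ i₄ μ' l' else 0) else 0 := by
        intro μ' _
        rw [← sum_ite_const]
        refine Finset.sum_congr rfl fun l' _ => ?_
        simp only [ite_and, ite_smul, zero_smul]
      rw [Finset.sum_congr rfl hpt, ← Finset.sum_filter, reindex_up 0 m]
      refine Finset.sum_congr rfl fun μ _ => ?_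
      rw [dwn4_upd4]
      simp only [upd4_apply, Fin.reduceEq, reduceIte, Nat.add_sub_cancel]
      rw [show μ 0 + 1 + μ 1 + 1 = (μ 0 + μ 1 + 1) + 1 from by omega, Finset.sum_range_succ']
      simp only [Nat.add_sub_cancel, Nat.le_add_left, if_true, Nat.lt_irrefl]
      norm_num
    have P1a : (∑ μ' ∈ Finset.Nat.antidiagonalTuple 4 (m+1), ∑ l' ∈ Finset.range (μ' 0 + μ' 1 + 1),
          (if 1 ≤ μ' 1 then Nat.multinomial Finset.univ (dwn4 1 μ') * (μ' 0 + (μ' 1 - 1)).choose l' else 0)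
            • qt ε i₁ i₂ i₃ i₄ μ' l')
        = ∑ μ ∈ Finset.Nat.antidiagonalTuple 4 m, ∑ l ∈ Finset.range (μ 0 + μ 1 + 1),
          (Nat.multinomial Finset.univ μ * (μ 0 + μ 1).choose l) • qt ε i₁ i₂ i₃ i₄ (upd4 1 μ) l := by
      have hpt : ∀ μ' ∈ Finset.Nat.antidiagonalTuple 4 (m+1),
          (∑ l' ∈ Finset.range (μ' 0 + μ' 1 + 1),
            (if 1 ≤ μ' 1 then Nat.multinomial Finset.univ (dwn4 1 μ') * (μ' 0 + (μ' 1 - 1)).choose l' else 0)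
              • qt ε i₁ i₂ i₃ i₄ μ' l')
          = if 1 ≤ μ' 1 then (∑ l' ∈ Finset.range (μ' 0 + μ' 1 + 1),
              (Nat.multinomial Finset.univ (dwn4 1 μ') * (μ' 0 + (μ' 1 - 1)).choose l')
                • qt ε i₁ i₂ i₃ i₄ μ' l') else 0 := by
        intro μ' _
        simp only [ite_smul, zero_smul]
        exact sum_ite_const _ _
      rw [Finset.sum_congr rfl hpt, ← Finset.sum_filter, reindex_up 1 m]
      refine Finset.sum_congr rfl fun μ _ => ?_
      rw [dwn4_upd4]
      simp only [upd4_apply, Fin.reduceEq, reduceIte, Nat.add_sub_cancel]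
      rw [show μ 0 + (μ 1 + 1) + 1 = (μ 0 + μ 1 + 1) + 1 from by omega, Finset.sum_range_succ,
        Nat.choose_eq_zero_of_lt (by omega), Nat.mul_zero, zero_smul, add_zero]
    have P1b : (∑ μ' ∈ Finset.Nat.antidiagonalTuple 4 (m+1), ∑ l' ∈ Finset.range (μ' 0 + μ' 1 + 1),
          (if 1 ≤ μ' 1 ∧ 1 ≤ l' then
            Nat.multinomial Finset.univ (dwn4 1 μ') * (μ' 0 + (μ' 1 - 1)).choose (l' - 1) else 0)
            • qt ε i₁ i₂ i₃ i₄ μ' l')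
        = ∑ μ ∈ Finset.Nat.antidiagonalTuple 4 m, ∑ l ∈ Finset.range (μ 0 + μ 1 + 1),
          (Nat.multinomial Finset.univ μ * (μ 0 + μ 1).choose l) • qt ε i₁ i₂ i₃ i₄ (upd4 1 μ) (l + 1) := by
      have hpt : ∀ μ' ∈ Finset.Nat.antidiagonalTuple 4 (m+1),
          (∑ l' ∈ Finset.range (μ' 0 + μ' 1 + 1),
            (if 1 ≤ μ' 1 ∧ 1 ≤ l' then
              Nat.multinomial Finset.univ (dwn4 1 μ') * (μ' 0 + (μ' 1 - 1)).choose (l' - 1) else 0)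
              • qt ε i₁ i₂ i₃ i₄ μ' l')
          = if 1 ≤ μ' 1 then (∑ l' ∈ Finset.range (μ' 0 + μ' 1 + 1),
              if 1 ≤ l' then (Nat.multinomial Finset.univ (dwn4 1 μ') * (μ' 0 + (μ' 1 - 1)).choose (l' - 1))
                • qt ε i₁ i₂ i₃ i₄ μ' l' else 0) else 0 := by
        intro μ' _
        rw [← sum_ite_const]
        refine Finset.sum_congr rfl fun l' _ => ?_
        simp only [ite_and, ite_smul, zero_smul]
      rw [Finset.sum_congr rfl hpt, ← Finset.sum_filter, reindex_up 1 m]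
      refine Finset.sum_congr rfl fun μ _ => ?_
      rw [dwn4_upd4]
      simp only [upd4_apply, Fin.reduceEq, reduceIte, Nat.add_sub_cancel]
      rw [show μ 0 + (μ 1 + 1) + 1 = (μ 0 + μ 1 + 1) + 1 from by omega, Finset.sum_range_succ']
      simp only [Nat.add_sub_cancel, Nat.le_add_left, if_true, Nat.lt_irrefl]
      norm_num
    calc ∑ μ' ∈ Finset.Nat.antidiagonalTuple 4 (m+1), ∑ l' ∈ Finset.range (μ' 0 + μ' 1 + 1),
          (Nat.multinomial Finset.univ μ' * (μ' 0 + μ' 1).choose l') • qt ε i₁ i₂ i₃ i₄ μ' l'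
        = ∑ μ' ∈ Finset.Nat.antidiagonalTuple 4 (m+1), ∑ l' ∈ Finset.range (μ' 0 + μ' 1 + 1),
          (((if 1 ≤ μ' 0 then Nat.multinomial Finset.univ (dwn4 0 μ') * (μ' 0 - 1 + μ' 1).choose l' else 0)
          + (if 1 ≤ μ' 0 ∧ 1 ≤ l' then
              Nat.multinomial Finset.univ (dwn4 0 μ') * (μ' 0 - 1 + μ' 1).choose (l' - 1) else 0))
          + ((if 1 ≤ μ' 1 then Nat.multinomial Finset.univ (dwn4 1 μ') * (μ' 0 + (μ' 1 - 1)).choose l' else 0)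
          + (if 1 ≤ μ' 1 ∧ 1 ≤ l' then
              Nat.multinomial Finset.univ (dwn4 1 μ') * (μ' 0 + (μ' 1 - 1)).choose (l' - 1) else 0))
          + (if 1 ≤ μ' 2 then Nat.multinomial Finset.univ (dwn4 2 μ') * (μ' 0 + μ' 1).choose l' else 0)
          + (if 1 ≤ μ' 3 then Nat.multinomial Finset.univ (dwn4 3 μ') * (μ' 0 + μ' 1).choose l' else 0))
            • qt ε i₁ i₂ i₃ i₄ μ' l' := by
          refine Finset.sum_congr rfl fun μ' hμ' => Finset.sum_congr rfl fun l' _ => ?_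
          rw [nat_split μ' (hsum1 μ' hμ') l']
      _ = _ := by
          simp only [add_smul, Finset.sum_add_distrib]
          rw [P0a, P0b, P1a, P1b, P2, P3]
          simp only [smul_add, Finset.sum_add_distrib]
          abel

open ExteriorAlgebra in
/-- Proposition 4.3 (iii): for the inverse Hasse–Schmidt operator `𝔇₂` on `⋀M_n`,
`𝔇₂^m(ε^{i₁}∧ε^{i₂}∧ε^{i₃}∧ε^{i₄}) = Σ_{μ∈p₄(m), 0≤l≤μ₁+μ₂}
  (m!/(μ₁!μ₂!μ₃!μ₄!)) C(μ₁+μ₂,l)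
  ε^{i₁+μ₁+μ₄} ∧ ε^{i₂+μ₂+μ₄} ∧ ε^{i₃+μ₃+l} ∧ ε^{i₄+μ₁+μ₂+μ₃−l}`. -/
theorem inverse_hasseSchmidt_D2bar_pow_quadruple (n : ℕ) (M : Type*)
    [AddCommGroup M] [Module ℤ M] (ε : ℕ → M) (hε : ∀ m : ℕ, n < m → ε m = 0)
    (Dbar : ℕ → Module.End ℤ (ExteriorAlgebra ℤ M))
    (hB0 : Dbar 0 = 1)
    (hBLeib : ∀ (h : ℕ) (p q : ExteriorAlgebra ℤ M),
      Dbar h (p * q) = ∑ x ∈ Finset.HasAntidiagonal.antidiagonal h, Dbar x.1 p * Dbar x.2 q)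
    (hB1 : ∀ i : ℕ, 1 ≤ i → Dbar 1 (ι ℤ (ε i)) = ι ℤ (ε (i + 1)))
    (hBhi : ∀ j i : ℕ, 2 ≤ j → 1 ≤ i → Dbar j (ι ℤ (ε i)) = 0)
    (m i₁ i₂ i₃ i₄ : ℕ) (h1 : 1 ≤ i₁) (h12 : i₁ < i₂) (h23 : i₂ < i₃)
    (h34 : i₃ < i₄) :
    (Dbar 2 ^ m) (ι ℤ (ε i₁) * ι ℤ (ε i₂) * ι ℤ (ε i₃) * ι ℤ (ε i₄)) =
      ∑ μ ∈ Finset.Nat.antidiagonalTuple 4 m,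
        ∑ l ∈ Finset.range (μ 0 + μ 1 + 1),
          ((Nat.multinomial Finset.univ μ) * (μ 0 + μ 1).choose l) •
            (ι ℤ (ε (i₁ + μ 0 + μ 3)) * ι ℤ (ε (i₂ + μ 1 + μ 3)) *
              ι ℤ (ε (i₃ + μ 2 + l)) *
              ι ℤ (ε (i₄ + μ 0 + μ 1 + μ 2 - l))) := by
  have := key_quad ε Dbar hB0 hBLeib hB1 hBhi i₁ i₂ i₃ i₄ h1 (by omega) (by omega) (by omega) m
  simpa [qt] using this
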